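/- Filtration argument for relative (mod-d̃) acyclicity (the engine of Theorem 10.2, H_k^{5,inv}(δ | d̃) = 0): assume (i) for every n ≥ 1 and every b ∈ B_n with d b = 0 there exists c ∈ C_{n−1} with b = d' c; and (ii) for every n ≥ 1 and all a ∈ A_n, b ∈ B_n with δ₁ a + d b = 0 there exist e ∈ A_{n−1}, f ∈ B_{n−1} with a = δ₁ e + d f, while for n = 0, δ₁ a + d b = 0 with a ∈ A_0 and b ∈ B_0 implies a = 0. Then for all a ∈ A and b ∈ B with δ a + d b = 0 there exist e ∈ A and f ∈ B such that a = δ e + d f. -/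

import Mathlib

section FiltAux

variable {R M M' : Type} [CommRing R] [AddCommGroup M] [Module R M]
  [AddCommGroup M'] [Module R M']

/-- The submodule of elements of degree `< N`. -/
def sBelow (T : ℕ → Submodule R M) : ℕ → Submodule R M
  | 0 => ⊥
  | n + 1 => sBelow T n ⊔ T n

lemma sBelow_mono (T : ℕ → Submodule R M) : Monotone (sBelow T) :=
  monotone_nat_of_le_succ fun _ => le_sup_left

lemma mem_sBelow_succ {T : ℕ → Submodule R M} {x : M} {n : ℕ} :
    x ∈ sBelow T (n + 1) ↔ ∃ y ∈ sBelow T n, ∃ z ∈ T n, x = y + z := by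
  constructor
  · intro h
    rcases Submodule.mem_sup.1 h with ⟨y, hy, z, hz, rfl⟩
    exact ⟨y, hy, z, hz, rfl⟩
  · rintro ⟨y, hy, z, hz, rfl⟩
    exact Submodule.add_mem_sup hy hz

lemma mem_sBelow_succ_of_deg {T : ℕ → Submodule R M} {x : M} {n : ℕ} (hx : x ∈ T n) :
    x ∈ sBelow T (n + 1) :=
  Submodule.mem_sup_right hx

lemma map_sBelow {T : ℕ → Submodule R M} {U : ℕ → Submodule R M'} (g : M →ₗ[R] M') (r : ℕ)
    (hg : ∀ n, ∀ x ∈ T n, g x ∈ U (n + r)) :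
    ∀ N, ∀ x ∈ sBelow T N, g x ∈ sBelow U (N + r) := by
  intro N
  induction N with
  | zero =>
    intro x hx
    have : x = 0 := by simpa [sBelow] using hx
    simp [this, sBelow]
  | succ n ih =>
    intro x hx
    rcases mem_sBelow_succ.1 hx with ⟨y, hy, z, hz, rfl⟩
    rw [map_add]
    have h1 : g y ∈ sBelow U (n + r + 1) := sBelow_mono U (Nat.le_succ _) (ih y hy)
    have h2 : g z ∈ sBelow U (n + r + 1) := mem_sBelow_succ_of_deg (hg n z hz)
    have : g y + g z ∈ sBelow U (n + r + 1) := Submodule.add_mem _ h1 h2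
    have hnn : n + r + 1 = n + 1 + r := by omega
    rwa [hnn] at this

lemma exists_mem_sBelow {T : ℕ → Submodule R M} (hT : iSup T = ⊤) (x : M) :
    ∃ N, x ∈ sBelow T N := by
  have hx : x ∈ ⨆ i, T i := by rw [hT]; trivial
  refine Submodule.iSup_induction (motive := fun y => ∃ N, y ∈ sBelow T N) T hx ?_ ?_ ?_
  · intro i y hy
    exact ⟨i + 1, mem_sBelow_succ_of_deg hy⟩
  · exact ⟨0, Submodule.zero_mem _⟩
  · rintro y z ⟨N, hN⟩ ⟨M, hM⟩
    exact ⟨max N M, Submodule.add_mem _ (sBelow_mono T (le_max_left _ _) hN)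
      (sBelow_mono T (le_max_right _ _) hM)⟩

lemma sBelow_le_ne {T : ℕ → Submodule R M} {m : ℕ} :
    ∀ k ≤ m, sBelow T k ≤ ⨆ (j) (_ : j ≠ m), T j := by
  intro k
  induction k with
  | zero => intro _; simp [sBelow]
  | succ n ih =>
    intro hnm
    have h1 : sBelow T n ≤ _ := ih (Nat.le_of_succ_le hnm)
    have h2 : T n ≤ ⨆ (j) (_ : j ≠ m), T j :=
      le_iSup₂_of_le n (by omega) le_rfl
    exact sup_le h1 h2

lemma top_eq_zero {T : ℕ → Submodule R M} (hind : iSupIndep T)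
    {m : ℕ} {x y : M} (hx : x ∈ T m) (hy : y ∈ sBelow T m) (hxy : x + y = 0) :
    x = 0 ∧ y = 0 := by
  have hx' : x ∈ ⨆ (j) (_ : j ≠ m), T j := by
    have hxy' : x = -y := eq_neg_of_add_eq_zero_left hxy
    rw [hxy']
    exact Submodule.neg_mem _ (sBelow_le_ne m le_rfl hy)
  have hx0 : x = 0 := by
    have : x ∈ (⊥ : Submodule R M) := (hind m).le_bot ⟨hx, hx'⟩
    simpa using this
  refine ⟨hx0, ?_⟩
  rw [hx0, zero_add] at hxy
  exact hxy

end FiltAux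

/-- Filtration argument for relative (mod-`d̃`) acyclicity: with `A`, `B`, `C`
internally ℕ-graded, `δ = δ₀ + δ₁` (degrees `0` and `1`) a differential on `A`,
`ε = ε₀ + ε₁` (degrees `0` and `1`) on `B`, `d : B → A` and `d' : C → B` of
degree `1` with `δd + dε = 0`, `δ₁d + dε₁ = 0`, `dd' = 0`, and assuming the
graded acyclicity hypotheses (i) and (ii) for `δ₁` modulo `d`, every solution of
`δa + db = 0` satisfies `a = δe + df` for some `e`, `f`. -/
theorem filtration_relative_acyclicity
    {R A B C : Type} [CommRing R]
    [AddCommGroup A] [Module R A] [AddCommGroup B] [Module R B]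
    [AddCommGroup C] [Module R C]
    (An : ℕ → Submodule R A) (Bn : ℕ → Submodule R B) (Cn : ℕ → Submodule R C)
    (hA : DirectSum.IsInternal An) (hB : DirectSum.IsInternal Bn)
    (hC : DirectSum.IsInternal Cn)
    (δ₀ δ₁ : A →ₗ[R] A) (ε₀ ε₁ : B →ₗ[R] B) (d : B →ₗ[R] A) (d' : C →ₗ[R] B)
    (hδ₀ : ∀ n : ℕ, ∀ x ∈ An n, δ₀ x ∈ An (n + 0))
    (hδ₁ : ∀ n : ℕ, ∀ x ∈ An n, δ₁ x ∈ An (n + 1))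
    (hε₀ : ∀ n : ℕ, ∀ x ∈ Bn n, ε₀ x ∈ Bn (n + 0))
    (hε₁ : ∀ n : ℕ, ∀ x ∈ Bn n, ε₁ x ∈ Bn (n + 1))
    (hd : ∀ n : ℕ, ∀ x ∈ Bn n, d x ∈ An (n + 1))
    (hd' : ∀ n : ℕ, ∀ x ∈ Cn n, d' x ∈ Bn (n + 1))
    (hnil : (δ₀ + δ₁) ∘ₗ (δ₀ + δ₁) = 0)
    (hanti : (δ₀ + δ₁) ∘ₗ d + d ∘ₗ (ε₀ + ε₁) = 0)
    (hanti₁ : δ₁ ∘ₗ d + d ∘ₗ ε₁ = 0)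
    (hdd' : d ∘ₗ d' = 0)
    (hi : ∀ n : ℕ, ∀ b ∈ Bn (n + 1), d b = 0 → ∃ c ∈ Cn n, d' c = b)
    (hii : ∀ n : ℕ, ∀ a ∈ An (n + 1), ∀ b ∈ Bn (n + 1), δ₁ a + d b = 0 →
      ∃ e ∈ An n, ∃ f ∈ Bn n, a = δ₁ e + d f)
    (hii₀ : ∀ a ∈ An 0, ∀ b ∈ Bn 0, δ₁ a + d b = 0 → a = 0) :
    ∀ (a : A) (b : B), (δ₀ + δ₁) a + d b = 0 →
      ∃ (e : A) (f : B), a = (δ₀ + δ₁) e + d f := by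
  have hAind : iSupIndep An := hA.submodule_iSupIndep
  have hAtop : iSup An = ⊤ := hA.submodule_iSup_eq_top
  have hBtop : iSup Bn = ⊤ := hB.submodule_iSup_eq_top
  -- main induction on the filtration degree
  have key : ∀ N : ℕ, ∀ a ∈ sBelow An N, ∀ b ∈ sBelow Bn N,
      (δ₀ + δ₁) a + d b = 0 → ∃ (e : A) (f : B), a = (δ₀ + δ₁) e + d f := by
    intro N
    induction N with
    | zero =>
      intro a ha b _ _
      have : a = 0 := by simpa [sBelow] using ha
      exact ⟨0, 0, by simp [this]⟩
    | succ N ih =>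
      intro a ha b hb heq
      rcases mem_sBelow_succ.1 ha with ⟨a', ha', aN, haN, rfl⟩
      rcases mem_sBelow_succ.1 hb with ⟨b', hb', bN, hbN, rfl⟩
      -- split the equation at degree N+1
      have hrest_mem : δ₀ a' + δ₁ a' + d b' + δ₀ aN ∈ sBelow An (N + 1) := by
        refine Submodule.add_mem _ (Submodule.add_mem _ (Submodule.add_mem _ ?_ ?_) ?_) ?_
        · exact sBelow_mono An (by omega) (map_sBelow δ₀ 0 hδ₀ N a' ha')
        · exact map_sBelow δ₁ 1 hδ₁ N a' ha'
        · exact map_sBelow d 1 hd N b' hb'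
        · exact mem_sBelow_succ_of_deg (by simpa using hδ₀ N aN haN)
      have htop_mem : δ₁ aN + d bN ∈ An (N + 1) :=
        Submodule.add_mem _ (hδ₁ N aN haN) (hd N bN hbN)
      have hsplit : (δ₁ aN + d bN) + (δ₀ a' + δ₁ a' + d b' + δ₀ aN) = 0 := by
        rw [← heq]
        simp only [LinearMap.add_apply, map_add]
        abel
      obtain ⟨htop, -⟩ := top_eq_zero hAind htop_mem hrest_mem hsplit
      -- case on N
      match N, ha', haN, hb', hbN, ih with
      | 0, ha', haN, hb', hbN, ih =>
        have haN0 : aN = 0 := hii₀ aN haN bN hbN htop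
        have ha0 : a' = 0 := by simpa [sBelow] using ha'
        exact ⟨0, 0, by simp [ha0, haN0]⟩
      | (m + 1), ha', haN, hb', hbN, ih =>
        obtain ⟨e, he, f, hf, haNdec⟩ := hii m aN haN bN hbN htop
        -- reduced pair
        set a₁ : A := a' - δ₀ e with ha₁def
        have ha₁mem : a₁ ∈ sBelow An (m + 1) :=
          Submodule.sub_mem _ ha' (mem_sBelow_succ_of_deg (by simpa using hδ₀ m e he))
        have hb₂mem : b' - ε₀ f ∈ sBelow Bn (m + 1) :=
          Submodule.sub_mem _ hb' (mem_sBelow_succ_of_deg (by simpa using hε₀ m f hf))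
        have hb₁Nmem : bN - ε₁ f ∈ Bn (m + 1) :=
          Submodule.sub_mem _ hbN (hε₁ m f hf)
        -- the reduced equation
        have hδδ : (δ₀ + δ₁) ((δ₀ + δ₁) e) = 0 := by
          have := LinearMap.congr_fun hnil e
          simpa using this
        have hδd : (δ₀ + δ₁) (d f) + d ((ε₀ + ε₁) f) = 0 := by
          have := LinearMap.congr_fun hanti f
          simpa using this
        have heq1 : (δ₀ + δ₁) a₁ + (d (bN - ε₁ f) + d (b' - ε₀ f)) = 0 := by
          have ha₁eq : a₁ = (a' + aN) - (δ₀ + δ₁) e - d f := by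
            rw [ha₁def, haNdec]
            simp only [LinearMap.add_apply]
            abel
          have hδd' : (δ₀ + δ₁) (d f) = -(d (ε₀ f) + d (ε₁ f)) := by
            have h := hδd
            simp only [LinearMap.add_apply, map_add] at h
            exact eq_neg_of_add_eq_zero_left (by rw [← add_assoc] at h ⊢; exact h)
          have hgoal : (δ₀ + δ₁) a₁ + (d (bN - ε₁ f) + d (b' - ε₀ f))
              = (δ₀ + δ₁) (a' + aN) + d (b' + bN) := by
            rw [ha₁eq]
            simp only [map_sub, map_add, hδδ, hδd']
            abel
          rw [hgoal]
          exact heq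
        -- split again at degree m+2
        have hrest2_mem : (δ₀ + δ₁) a₁ + d (b' - ε₀ f) ∈ sBelow An (m + 2) := by
          refine Submodule.add_mem _ ?_ ?_
          · have h0 : δ₀ a₁ ∈ sBelow An (m + 1) := by
              simpa using map_sBelow δ₀ 0 hδ₀ (m + 1) a₁ ha₁mem
            have h1 : δ₁ a₁ ∈ sBelow An (m + 2) := map_sBelow δ₁ 1 hδ₁ (m + 1) a₁ ha₁mem
            simpa [LinearMap.add_apply] using
              Submodule.add_mem _ (sBelow_mono An (by omega) h0) h1
          · exact map_sBelow d 1 hd (m + 1) _ hb₂mem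
        have htop2_mem : d (bN - ε₁ f) ∈ An (m + 2) := hd (m + 1) _ hb₁Nmem
        have hsplit2 : d (bN - ε₁ f) + ((δ₀ + δ₁) a₁ + d (b' - ε₀ f)) = 0 := by
          rw [← heq1]; abel
        obtain ⟨-, hrest2⟩ := top_eq_zero hAind htop2_mem hrest2_mem hsplit2
        obtain ⟨e', f', hsol⟩ := ih a₁ ha₁mem (b' - ε₀ f) hb₂mem hrest2
        refine ⟨e + e', f + f', ?_⟩
        have h2 : a' = a₁ + δ₀ e := by rw [ha₁def]; abel
        calc a' + aN = a₁ + δ₀ e + (δ₁ e + d f) := by rw [h2, haNdec]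
          _ = (δ₀ + δ₁) e' + d f' + δ₀ e + (δ₁ e + d f) := by rw [hsol]
          _ = (δ₀ + δ₁) (e + e') + d (f + f') := by
              simp only [map_add, LinearMap.add_apply]; abel
  intro a b heq
  obtain ⟨N, haN⟩ := exists_mem_sBelow hAtop a
  obtain ⟨M, hbM⟩ := exists_mem_sBelow hBtop b
  exact key (max N M) a (sBelow_mono An (le_max_left _ _) haN) b
    (sBelow_mono Bn (le_max_right _ _) hbM) heq
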